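/- arXiv:2501.08318 — 2 statements merged into one kernel-verified Lean document; each statement's English description precedes it below -/
import Mathlib

section
/- Let L be a finite lattice with |L| ≥ 3 and Dim(L) = m, let C be a finite nonempty chain disjoint from L, and let L' = L ]ᵇₐ C be the adjunct with respect to a pair a < b in L with b not covering a. Then m ≤ Dim(L') ≤ m + 1. -/
/-- A family of `t` relations is a *realizer* of the relation `le`:
each member is a linear order (on the whole ground set) and their
intersection is exactly `le`.  (In particular each member extends `le`.) -/
def IsRealizer {α : Type*} (le : α → α → Prop) {t : ℕ}
    (R : Fin t → α → α → Prop) : Prop :=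
  (∀ i, IsLinearOrder α (R i)) ∧ ∀ x y, le x y ↔ ∀ i, R i x y

/-- The Dushnik–Miller order dimension of the relation `le`: the least
positive number `t` of linear extensions whose intersection is `le`. -/
noncomputable def orderDim {α : Type*} (le : α → α → Prop) : ℕ :=
  sInf {t | 0 < t ∧ ∃ R : Fin t → α → α → Prop, IsRealizer le R}

/-- An element of a poset is doubly irreducible if it has at most one lower
cover and at most one upper cover. -/
def DoublyIrreducible {α : Type*} [PartialOrder α] (z : α) : Prop :=
  {w | w ⋖ z}.Subsingleton ∧ {w | z ⋖ w}.Subsingleton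

/-- An element is reducible if it is not doubly irreducible. -/
def Reducible {α : Type*} [PartialOrder α] (z : α) : Prop :=
  ¬ DoublyIrreducible z

/-- A lattice is an RC-lattice if any two of its reducible elements are
comparable. -/
def IsRCLattice (α : Type*) [Lattice α] : Prop :=
  ∀ x y : α, Reducible x → Reducible y → (x ≤ y ∨ y ≤ x)


/-- The ground set of the complete fundamental basic block `L_r`:
the chain `A₁ ≺ x₁ ≺ A₂ ≺ ⋯ ≺ x_{r-1} ≺ A_r` (of length `2r-1`,
`A_{i+1}` sitting at position `2i`, `x_{i+1}` at position `2i+1`),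
together with the doubly irreducible elements `c_{ij}` for `1 ≤ i < j ≤ r`. -/
def Lr (r : ℕ) : Type :=
  Fin (2 * r - 1) ⊕ {p : Fin r × Fin r // (p.1 : ℕ) < (p.2 : ℕ)}

namespace Lr

/-- The order of `L_r`: on the chain it is the usual order; `z ≤ c_{ij}` iff
`z ≤ A_i`; `c_{ij} ≤ z` iff `A_j ≤ z`; `c_{ij} ≤ c_{kl}` iff `(i,j) = (k,l)`
or `j ≤ k`. -/
def le {r : ℕ} (x y : Lr r) : Prop :=
  match x, y with
  | Sum.inl k, Sum.inl k' => (k : ℕ) ≤ (k' : ℕ)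
  | Sum.inl k, Sum.inr c => (k : ℕ) ≤ 2 * (c.1.1 : ℕ)
  | Sum.inr c, Sum.inl k => 2 * (c.1.2 : ℕ) ≤ (k : ℕ)
  | Sum.inr c, Sum.inr c' =>
      ((c.1.1 : ℕ) = (c'.1.1 : ℕ) ∧ (c.1.2 : ℕ) = (c'.1.2 : ℕ)) ∨
        (c.1.2 : ℕ) ≤ (c'.1.1 : ℕ)

instance (r : ℕ) : PartialOrder (Lr r) where
  le := le
  le_refl x := by rcases x with k | ⟨p, hp⟩ <;> simp [le]
  le_trans x y z hxy hyz := by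
    rcases x with k | ⟨p, hp⟩ <;> rcases y with k' | ⟨q, hq⟩ <;>
      rcases z with k'' | ⟨t, ht⟩ <;>
      simp only [le] at hxy hyz ⊢ <;> omega
  le_antisymm x y hxy hyx := by
    rcases x with k | ⟨p, hp⟩ <;> rcases y with k' | ⟨q, hq⟩ <;>
      simp only [le] at hxy hyx
    · exact congrArg Sum.inl (Fin.ext (by omega))
    · omega
    · omega
    · have h1 : (p.1 : ℕ) = (q.1 : ℕ) := by omega
      have h2 : (p.2 : ℕ) = (q.2 : ℕ) := by omega
      exact congrArg Sum.inr (Subtype.ext (Prod.ext (Fin.ext h1) (Fin.ext h2)))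

/-- The reducible element `A_{i+1}` of `L_r` (`i` is 0-based). -/
def A {r : ℕ} (i : Fin r) : Lr r :=
  Sum.inl ⟨2 * (i : ℕ), by have := i.2; omega⟩

/-- The doubly irreducible chain element `x_{i+1}` of `L_r` (`i` is 0-based). -/
def X {r : ℕ} (i : Fin (r - 1)) : Lr r :=
  Sum.inl ⟨2 * (i : ℕ) + 1, by have := i.2; omega⟩

/-- The doubly irreducible element `c_{(i+1)(j+1)}` of `L_r`
(`i`, `j` are 0-based). -/
def c {r : ℕ} (i j : Fin r) (h : (i : ℕ) < (j : ℕ)) : Lr r :=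
  Sum.inr ⟨(i, j), h⟩

end Lr


/-- The adjunct order `L₁ ]ᵇₐ L₂` on the disjoint union of two ordered sets
(with respect to the pair `a < b` of the first one):
`x ≤ y` iff both lie in `L₁` and `x ≤ y` there, or both lie in `L₂` and
`x ≤ y` there, or `x ∈ L₁`, `y ∈ L₂` and `x ≤ a`, or `x ∈ L₂`, `y ∈ L₁`
and `b ≤ y`. -/
def adjunctLE {α β : Type*} [LE α] [LE β] (a b : α) :
    α ⊕ β → α ⊕ β → Prop
  | Sum.inl x, Sum.inl y => x ≤ y
  | Sum.inl x, Sum.inr _ => x ≤ a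
  | Sum.inr _, Sum.inl y => b ≤ y
  | Sum.inr x, Sum.inr y => x ≤ y

/-- A subset of a lattice is a sublattice if it is closed under `⊔` and `⊓`. -/
def IsSublatticeSet {α : Type*} [Lattice α] (S : Set α) : Prop :=
  ∀ ⦃x⦄, x ∈ S → ∀ ⦃y⦄, y ∈ S → x ⊔ y ∈ S ∧ x ⊓ y ∈ S

/-- A finite lattice on `n` elements is dismantlable if there is a chain
`L₁ ⊆ L₂ ⊆ ⋯ ⊆ Lₙ` of sublattices with `|Lᵢ| = i` exhausting the lattice. -/
def Dismantlable (α : Type*) [Lattice α] : Prop :=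
  ∃ S : Fin (Nat.card α) → Set α,
    (∀ i, IsSublatticeSet (S i)) ∧
    (∀ i j, i ≤ j → S i ⊆ S j) ∧
    (∀ i, Nat.card (S i) = (i : ℕ) + 1) ∧
    (∀ x : α, ∃ i, x ∈ S i)

/-- The cover graph of a poset: `x` and `y` are adjacent iff one covers the
other. -/
def coverGraph (α : Type*) [PartialOrder α] : SimpleGraph α where
  Adj x y := x ⋖ y ∨ y ⋖ x
  symm := ⟨fun x y h => h.symm⟩
  loopless := ⟨fun x h => by rcases h with h | h <;> exact lt_irrefl x h.lt⟩

/-- The nullity of a poset: (number of covering pairs) − (number of elements)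
+ (number of connected components of the cover graph). -/
noncomputable def nullity (α : Type*) [PartialOrder α] : ℤ :=
  (Nat.card {p : α × α // p.1 ⋖ p.2} : ℤ) - (Nat.card α : ℤ) +
    (Nat.card (coverGraph α).ConnectedComponent : ℤ)

/-- `(a, b)` is an adjunct pair of the lattice `α`: `a < b` and `α` can be
partitioned into nonempty sublattices `K` and `M` with `a, b ∈ K`, `b` not
covering `a` within `K`, such that for `x ∈ K`, `y ∈ M`: `x ≤ y ↔ x ≤ a`
and `y ≤ x ↔ b ≤ x`. -/
def IsAdjunctPair {α : Type*} [Lattice α] (a b : α) : Prop :=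
  a < b ∧ ∃ K M : Set α, K.Nonempty ∧ M.Nonempty ∧ Disjoint K M ∧
    K ∪ M = Set.univ ∧ IsSublatticeSet K ∧ IsSublatticeSet M ∧
    a ∈ K ∧ b ∈ K ∧ (∃ z ∈ K, a < z ∧ z < b) ∧
    ∀ x ∈ K, ∀ y ∈ M, (x ≤ y ↔ x ≤ a) ∧ (y ≤ x ↔ b ≤ x)

/-- `s` is the least upper bound of `x` and `y` with respect to the
relation `le`. -/
def IsLUBRel {γ : Type*} (le : γ → γ → Prop) (x y s : γ) : Prop :=
  le x s ∧ le y s ∧ ∀ z, le x z → le y z → le s z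

/-- `s` is the greatest lower bound of `x` and `y` with respect to the
relation `le`. -/
def IsGLBRel {γ : Type*} (le : γ → γ → Prop) (x y s : γ) : Prop :=
  le s x ∧ le s y ∧ ∀ z, le z x → le z y → le z s

/-- `y` covers `x` with respect to the relation `le`. -/
def RelCovBy {γ : Type*} (le : γ → γ → Prop) (x y : γ) : Prop :=
  le x y ∧ x ≠ y ∧ ∀ z, le x z → le z y → z = x ∨ z = y

private lemma lin_of_parts {γ : Type*} (r : γ → γ → Prop)
    (hr : IsRefl γ r) (ht : IsTrans γ r) (ha : IsAntisymm γ r) (hto : IsTotal γ r) :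
    IsLinearOrder γ r := by
  haveI := hr; haveI := ht; haveI := ha; haveI := hto
  haveI : IsPreorder γ r := ⟨⟩
  haveI : IsPartialOrder γ r := ⟨⟩
  exact ⟨⟩

private lemma exists_sep_ext {α : Type*} [PartialOrder α] {x y : α} (h : ¬ x ≤ y) :
    ∃ L : α → α → Prop, IsLinearOrder α L ∧ (∀ u v : α, u ≤ v → L u v) ∧ L y x := by
  set s : α → α → Prop := fun z w => z ≤ w ∨ (z ≤ y ∧ x ≤ w) with hs
  haveI : IsRefl α s := ⟨fun z => Or.inl le_rfl⟩
  haveI : IsTrans α s := ⟨fun z w v hzw hwv => by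
    rcases hzw with h1 | ⟨h1, h2⟩ <;> rcases hwv with h3 | ⟨h3, h4⟩
    · exact Or.inl (h1.trans h3)
    · exact Or.inr ⟨h1.trans h3, h4⟩
    · exact Or.inr ⟨h1, h2.trans h3⟩
    · exact absurd (h2.trans h3) h⟩
  haveI : IsAntisymm α s := ⟨fun z w hzw hwz => by
    rcases hzw with h1 | ⟨h1, h2⟩ <;> rcases hwz with h3 | ⟨h3, h4⟩
    · exact le_antisymm h1 h3
    · exact absurd (h4.trans (h1.trans h3)) h
    · exact absurd (h2.trans (h3.trans h1)) h
    · exact absurd (h2.trans h3) h⟩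
  haveI : IsPreorder α s := ⟨⟩
  haveI : IsPartialOrder α s := ⟨⟩
  obtain ⟨L, hL, hsub⟩ := extend_partialOrder s
  exact ⟨L, hL, fun u v huv => hsub _ _ (Or.inl huv), hsub _ _ (Or.inr ⟨le_rfl, le_rfl⟩)⟩

private lemma exists_top_ext {α : Type*} [PartialOrder α] (b : α) :
    ∃ T : α → α → Prop, IsLinearOrder α T ∧ (∀ u v : α, u ≤ v → T u v) ∧
      ∀ y, T b y → b ≤ y := by
  set s : α → α → Prop := fun z w => z ≤ w ∨ (¬ b ≤ z ∧ b ≤ w) with hs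
  haveI : IsRefl α s := ⟨fun z => Or.inl le_rfl⟩
  haveI : IsTrans α s := ⟨fun z w v hzw hwv => by
    rcases hzw with h1 | ⟨h1, h2⟩ <;> rcases hwv with h3 | ⟨h3, h4⟩
    · exact Or.inl (h1.trans h3)
    · exact Or.inr ⟨fun hb => h3 (hb.trans h1), h4⟩
    · exact Or.inr ⟨h1, h2.trans h3⟩
    · exact absurd h2 h3⟩
  haveI : IsAntisymm α s := ⟨fun z w hzw hwz => by
    rcases hzw with h1 | ⟨h1, h2⟩ <;> rcases hwz with h3 | ⟨h3, h4⟩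
    · exact le_antisymm h1 h3
    · exact absurd (h4.trans h1) h3
    · exact absurd (h2.trans h3) h1
    · exact absurd h2 h3⟩
  haveI : IsPreorder α s := ⟨⟩
  haveI : IsPartialOrder α s := ⟨⟩
  obtain ⟨T, hT, hsub⟩ := extend_partialOrder s
  haveI := hT
  refine ⟨T, hT, fun u v huv => hsub _ _ (Or.inl huv), fun y hby => ?_⟩
  by_contra hnot
  have h2 : T y b := hsub _ _ (Or.inr ⟨hnot, le_rfl⟩)
  exact hnot (le_of_eq (antisymm hby h2))

private def sumInsOrd {α β : Type*} (L : α → α → Prop) (le' : β → β → Prop)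
    (P : α → Prop) : α ⊕ β → α ⊕ β → Prop
  | Sum.inl x, Sum.inl y => L x y
  | Sum.inl x, Sum.inr _ => P x
  | Sum.inr _, Sum.inl y => ¬ P y
  | Sum.inr c, Sum.inr c' => le' c c'

private lemma sumInsOrd_isLinear {α β : Type*} {L : α → α → Prop} {le' : β → β → Prop}
    {P : α → Prop} (hL : IsLinearOrder α L) (hle' : IsLinearOrder β le')
    (hP : ∀ x y, L x y → P y → P x) :
    IsLinearOrder (α ⊕ β) (sumInsOrd L le' P) := by
  classical
  haveI := hL; haveI := hle'
  refine lin_of_parts _ ⟨?_⟩ ⟨?_⟩ ⟨?_⟩ ⟨?_⟩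
  · rintro (x | c)
    · exact refl_of L x
    · exact refl_of le' c
  · rintro (x | c) (y | d) (z | e) h1 h2 <;> simp only [sumInsOrd] at *
    · exact trans_of L h1 h2
    · exact hP x y h1 h2
    · rcases total_of L x z with h | h
      · exact h
      · exact absurd (hP z x h h1) h2
    · exact h1
    · exact fun hz => h1 (hP y z h2 hz)
    · exact absurd h2 h1
    · exact h2
    · exact trans_of le' h1 h2
  · rintro (x | c) (y | d) h1 h2 <;> simp only [sumInsOrd] at *
    · exact congrArg Sum.inl (antisymm h1 h2)
    · exact absurd h1 h2
    · exact absurd h2 h1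
    · exact congrArg Sum.inr (antisymm h1 h2)
  · rintro (x | c) (y | d) <;> simp only [sumInsOrd]
    · exact total_of L x y
    · by_cases h : P x
      · exact Or.inl h
      · exact Or.inr h
    · by_cases h : P y
      · exact Or.inr h
      · exact Or.inl h
    · exact total_of le' c d

private lemma exists_realizer (α : Type*) [PartialOrder α] [Finite α] [Nonempty α] :
    ∃ t, 0 < t ∧ ∃ R : Fin t → α → α → Prop,
      IsRealizer ((· ≤ ·) : α → α → Prop) R := by
  classical
  obtain ⟨n, ⟨e⟩⟩ := Finite.exists_equiv_fin (α × α)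
  obtain ⟨b⟩ := ‹Nonempty α›
  obtain ⟨L₀, hL₀, hsub₀, -⟩ := exists_top_ext b
  set F : α × α → (α → α → Prop) := fun p =>
    if h : ¬ p.1 ≤ p.2 then (exists_sep_ext h).choose else L₀ with hF
  have hFlin : ∀ p, IsLinearOrder α (F p) := by
    intro p; rw [hF]; dsimp only
    split
    · rename_i h; exact (exists_sep_ext h).choose_spec.1
    · exact hL₀
  have hFsub : ∀ p, ∀ u v : α, u ≤ v → F p u v := by
    intro p; rw [hF]; dsimp only
    split
    · rename_i h; exact (exists_sep_ext h).choose_spec.2.1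
    · exact hsub₀
  have hFsep : ∀ p : α × α, ¬ p.1 ≤ p.2 → F p p.2 p.1 := by
    intro p hp; rw [hF]; dsimp only; rw [dif_pos hp]
    exact (exists_sep_ext hp).choose_spec.2.2
  refine ⟨n + 1, Nat.succ_pos n, fun i =>
    if h : (i : ℕ) < n then F (e.symm ⟨i, h⟩) else L₀, ?_, ?_⟩
  · intro i
    show IsLinearOrder α (if h : (i : ℕ) < n then F (e.symm ⟨i, h⟩) else L₀)
    split
    · exact hFlin _
    · exact hL₀
  · intro x y
    constructor
    · intro hxy i
      show (if h : (i : ℕ) < n then F (e.symm ⟨i, h⟩) else L₀) x y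
      split
      · exact hFsub _ _ _ hxy
      · exact hsub₀ _ _ hxy
    · intro hall
      by_contra hxy
      have hj : ((e (x, y)) : ℕ) < n := (e (x, y)).2
      have h1 : (if h : ((⟨(e (x, y) : ℕ), hj.trans (Nat.lt_succ_self n)⟩ : Fin (n+1)) : ℕ) < n
          then F (e.symm ⟨(⟨(e (x, y) : ℕ), hj.trans (Nat.lt_succ_self n)⟩ : Fin (n+1)), h⟩) else L₀) x y :=
        hall ⟨(e (x, y) : ℕ), hj.trans (Nat.lt_succ_self n)⟩
      rw [dif_pos hj] at h1
      have he : e.symm ⟨(e (x, y) : ℕ), hj⟩ = (x, y) := by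
        have h3 : (⟨(e (x, y) : ℕ), hj⟩ : Fin n) = e (x, y) := Fin.ext rfl
        rw [h3, Equiv.symm_apply_apply]
      rw [he] at h1
      have h2 := hFsep (x, y) hxy
      haveI := hFlin (x, y)
      exact hxy (le_of_eq (antisymm h1 h2))

private lemma forall_snoc_iff {m : ℕ} {γ : Type*} (f : Fin m → γ) (x : γ)
    (Q : γ → Prop) : (∀ i : Fin (m + 1), Q (Fin.snoc (α := fun _ => γ) f x i)) ↔
      (∀ j : Fin m, Q (f j)) ∧ Q x := by
  constructor
  · intro h
    refine ⟨fun j => ?_, ?_⟩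
    · have := h j.castSucc
      rwa [Fin.snoc_castSucc] at this
    · have := h (Fin.last m)
      rwa [Fin.snoc_last] at this
  · rintro ⟨h1, h2⟩ i
    refine Fin.lastCases ?_ ?_ i
    · rwa [Fin.snoc_last]
    · intro j; rw [Fin.snoc_castSucc]; exact h1 j

private lemma forall_snoc_iff' {m : ℕ} {γ δ : Type*}
    (f : Fin m → γ → δ → Prop) (x : γ → δ → Prop) (p : γ) (q : δ) :
    (∀ i : Fin (m + 1), Fin.snoc (α := fun _ => γ → δ → Prop) f x i p q) ↔
      (∀ j : Fin m, f j p q) ∧ x p q :=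
  forall_snoc_iff f x (fun r => r p q)

private lemma realizer_restrict {α β : Type*} [PartialOrder α] [LE β]
    {a b : α} {t : ℕ} {R : Fin t → (α ⊕ β) → (α ⊕ β) → Prop}
    (hR : IsRealizer (adjunctLE (α := α) (β := β) a b) R) :
    IsRealizer ((· ≤ ·) : α → α → Prop) (fun i x y => R i (.inl x) (.inl y)) := by
  constructor
  · intro i
    haveI := hR.1 i
    exact lin_of_parts _ ⟨fun z => refl_of (R i) _⟩
      ⟨fun x y z h1 h2 => trans_of (R i) h1 h2⟩
      ⟨fun x y h1 h2 => Sum.inl.inj (antisymm h1 h2)⟩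
      ⟨fun x y => total_of (R i) _ _⟩
  · intro x y
    exact hR.2 (.inl x) (.inl y)

private lemma adjunct_realizer {α β : Type*} [PartialOrder α] [LinearOrder β]
    {a b : α} (hab : a < b) {m : ℕ} {R : Fin m → α → α → Prop}
    (hR : IsRealizer ((· ≤ ·) : α → α → Prop) R) :
    ∃ S : Fin (m + 1) → (α ⊕ β) → (α ⊕ β) → Prop,
      IsRealizer (adjunctLE (α := α) (β := β) a b) S := by
  obtain ⟨T, hT, hTsub, hTb⟩ := exists_top_ext b
  haveI := hT
  have hβ : IsLinearOrder β ((· ≤ ·) : β → β → Prop) :=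
    lin_of_parts _ inferInstance inferInstance inferInstance inferInstance
  refine ⟨Fin.snoc (fun i => sumInsOrd (R i) (· ≤ ·) (fun x => R i x a))
      (sumInsOrd T (· ≤ ·) (fun x => ¬ T b x)), ?_, ?_⟩
  · rw [forall_snoc_iff]
    constructor
    · intro j
      haveI := hR.1 j
      exact sumInsOrd_isLinear (hR.1 j) hβ (fun x y h1 h2 => trans_of (R j) h1 h2)
    · exact sumInsOrd_isLinear hT hβ
        (fun x y h1 h2 hbx => h2 (trans_of T hbx h1))
  · intro p q
    rw [forall_snoc_iff']
    rcases p with x | c <;> rcases q with y | d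
    · show x ≤ y ↔ (∀ j, R j x y) ∧ T x y
      constructor
      · intro h
        exact ⟨(hR.2 x y).1 h, hTsub _ _ h⟩
      · rintro ⟨h1, -⟩
        exact (hR.2 x y).2 h1
    · show x ≤ a ↔ (∀ j, R j x a) ∧ ¬ T b x
      constructor
      · intro h
        refine ⟨(hR.2 x a).1 h, fun hbx => ?_⟩
        exact absurd ((hTb x hbx).trans h) (not_le_of_gt hab)
      · rintro ⟨h1, -⟩
        exact (hR.2 x a).2 h1
    · show b ≤ y ↔ (∀ j, ¬ R j y a) ∧ ¬ ¬ T b y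
      constructor
      · intro h
        refine ⟨fun j hya => ?_, not_not_intro (hTsub _ _ h)⟩
        haveI := hR.1 j
        have hay : R j a y := (hR.2 a y).1 (le_of_lt (hab.trans_le h)) j
        have hya' : y = a := antisymm hya hay
        rw [hya'] at h
        exact absurd h (not_le_of_gt hab)
      · rintro ⟨-, h2⟩
        exact hTb y (not_not.mp h2)
    · show c ≤ d ↔ (∀ _ : Fin m, c ≤ d) ∧ c ≤ d
      exact ⟨fun h => ⟨fun _ => h, h⟩, fun h => h.2⟩

/-- adjoining a finite nonempty chain to a finite lattice `L`
with `|L| ≥ 3` and `Dim L = m` yields a lattice of dimension between `m`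
and `m + 1`. -/
theorem dim_adjunct_chain {α : Type*} [Lattice α] [Finite α]
    {β : Type*} [LinearOrder β] [Finite β] [Nonempty β]
    (hcard : 3 ≤ Nat.card α) {a b : α} (hab : a < b) (hcov : ¬ a ⋖ b)
    {m : ℕ} (hm : orderDim ((· ≤ ·) : α → α → Prop) = m) :
    m ≤ orderDim (adjunctLE (α := α) (β := β) a b) ∧
      orderDim (adjunctLE (α := α) (β := β) a b) ≤ m + 1 := by
  haveI : Nonempty α := (Nat.card_pos_iff.mp (by omega)).1
  have hSα : {t | 0 < t ∧ ∃ R : Fin t → α → α → Prop,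
      IsRealizer ((· ≤ ·) : α → α → Prop) R}.Nonempty := exists_realizer α
  obtain ⟨hmpos, R, hRr⟩ : 0 < m ∧ ∃ R : Fin m → α → α → Prop,
      IsRealizer ((· ≤ ·) : α → α → Prop) R := by
    rw [← hm]; exact Nat.sInf_mem hSα
  obtain ⟨S, hS⟩ := adjunct_realizer (β := β) hab hRr
  have hup : orderDim (adjunctLE (α := α) (β := β) a b) ≤ m + 1 :=
    Nat.sInf_le ⟨Nat.succ_pos m, S, hS⟩
  have hSadj : Set.Nonempty {t | 0 < t ∧ ∃ R : Fin t → (α ⊕ β) → (α ⊕ β) → Prop,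
      IsRealizer (adjunctLE (α := α) (β := β) a b) R} := ⟨m + 1, Nat.succ_pos m, S, hS⟩
  obtain ⟨hpos', R', hR'⟩ : 0 < orderDim (adjunctLE (α := α) (β := β) a b) ∧
      ∃ R' : Fin (orderDim (adjunctLE (α := α) (β := β) a b)) →
        (α ⊕ β) → (α ⊕ β) → Prop, IsRealizer (adjunctLE (α := α) (β := β) a b) R' :=
    Nat.sInf_mem hSadj
  refine ⟨?_, hup⟩
  rw [← hm]
  exact Nat.sInf_le ⟨hpos', _, realizer_restrict hR'⟩
end

section
/- Let L be a finite dismantlable lattice that is not a chain, let (a, b) be an adjunct pair of L, and let C be a finite nonempty chain disjoint from L. Then Dim(L ]ᵇₐ C) = Dim(L). -/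
section AuxRealizer

variable {γ : Type*}

lemma isLinearOrder_mk {r : γ → γ → Prop} (hrefl : ∀ x, r x x)
    (htrans : ∀ x y z, r x y → r y z → r x z)
    (hanti : ∀ x y, r x y → r y x → x = y)
    (htot : ∀ x y, r x y ∨ r y x) : IsLinearOrder γ r :=
  { refl := hrefl, trans := htrans, antisymm := hanti, total := htot }

lemma exists_realizer_s10 [Finite γ] {le : γ → γ → Prop} (hpo : IsPartialOrder γ le) :
    ∃ t : ℕ, 0 < t ∧ ∃ R : Fin t → γ → γ → Prop, IsRealizer le R := by
  classical
  haveI := Fintype.ofFinite γ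
  haveI := hpo
  obtain ⟨base, hbase, hbase_le⟩ := extend_partialOrder le
  have hpair : ∀ p : γ × γ, ∃ s : γ → γ → Prop,
      IsLinearOrder γ s ∧ (∀ u v, le u v → s u v) ∧ (¬ le p.1 p.2 → s p.2 p.1) := by
    rintro ⟨x₀, y₀⟩
    by_cases hxy : le x₀ y₀
    · exact ⟨base, hbase, fun u v h => hbase_le u v h, fun h => absurd hxy h⟩
    · set le' : γ → γ → Prop := fun u v => le u v ∨ (le u y₀ ∧ le x₀ v) with hle'
      haveI : IsPartialOrder γ le' := by
        refine { refl := fun x => Or.inl (hpo.refl x), trans := ?_, antisymm := ?_ }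
        · rintro u v w (huv | ⟨h1, h2⟩) (hvw | ⟨h3, h4⟩)
          · exact Or.inl (hpo.trans _ _ _ huv hvw)
          · exact Or.inr ⟨hpo.trans _ _ _ huv h3, h4⟩
          · exact Or.inr ⟨h1, hpo.trans _ _ _ h2 hvw⟩
          · exact absurd (hpo.trans _ _ _ h2 h3) hxy
        · rintro u v (huv | ⟨h1, h2⟩) (hvu | ⟨h3, h4⟩)
          · exact hpo.antisymm _ _ huv hvu
          · exact absurd (hpo.trans _ _ _ h4 (hpo.trans _ _ _ huv h3)) hxy
          · exact absurd (hpo.trans _ _ _ h2 (hpo.trans _ _ _ hvu h1)) hxy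
          · exact absurd (hpo.trans _ _ _ h2 h3) hxy
      obtain ⟨s, hs, hs_le⟩ := extend_partialOrder le'
      refine ⟨s, hs, fun u v h => hs_le u v (Or.inl h), fun _ =>
        hs_le y₀ x₀ (Or.inr ⟨hpo.refl y₀, hpo.refl x₀⟩)⟩
  choose sFor hs_lin hs_ext hs_rev using hpair
  set n := Fintype.card (γ × γ) with hn
  set e : γ × γ ≃ Fin n := Fintype.equivFin (γ × γ) with he
  set R : Fin (n + 1) → γ → γ → Prop :=
    fun i => Fin.cases base (fun j => sFor (e.symm j)) i with hR
  refine ⟨n + 1, Nat.succ_pos n, R, ?_, ?_⟩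
  · intro i
    refine Fin.cases ?_ ?_ i
    · exact hbase
    · intro j; exact hs_lin _
  · intro x y
    constructor
    · intro hxy i
      refine Fin.cases ?_ ?_ i
      · exact hbase_le x y hxy
      · intro j; exact hs_ext _ _ _ hxy
    · intro hall
      by_contra hxy
      by_cases hyx : le y x
      · have hne : x ≠ y := fun h => hxy (h ▸ hpo.refl x)
        have h0 : R 0 x y := hall 0
        have h0' : base y x := hbase_le y x hyx
        have : x = y := hbase.antisymm _ _ (by simpa [R] using h0) h0'
        exact hne this
      · -- x, y incomparable; use the extension for the pair (x, y)
        have hkey := hs_rev (x, y) hxy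
        have hne : x ≠ y := fun h => hxy (h ▸ hpo.refl x)
        have hi : R (Fin.succ (e (x, y))) x y := hall _
        have hi' : sFor (x, y) x y := by
          have : R (Fin.succ (e (x, y))) = sFor (e.symm (e (x, y))) := by
            simp [R]
          rw [this, Equiv.symm_apply_apply] at hi
          exact hi
        exact hne ((hs_lin (x, y)).antisymm _ _ hi' hkey)

end AuxRealizer

/-- Auxiliary relation on a disjoint union used to build realizers of adjuncts:
`S` orders the left part, `P` is a downward-closed cut deciding mixed pairs,
and the right part keeps its own order. -/
def adjRel {α β : Type*} [LE β] (S : α → α → Prop) (P : α → Prop) :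
    α ⊕ β → α ⊕ β → Prop
  | Sum.inl x, Sum.inl y => S x y
  | Sum.inl x, Sum.inr _ => P x
  | Sum.inr _, Sum.inl y => ¬ P y
  | Sum.inr c, Sum.inr c' => c ≤ c'

/-- adjoining a finite nonempty chain to a finite dismantlable
lattice `L` (which is not a chain) along an adjunct pair `(a, b)` of `L`
does not change the order dimension. -/
theorem dim_adjunct_chain_at_adjunct_pair {α : Type*} [Lattice α] [Finite α]
    {β : Type*} [LinearOrder β] [Finite β] [Nonempty β]
    (hd : Dismantlable α) (hnc : ¬ ∀ x y : α, x ≤ y ∨ y ≤ x)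
    {a b : α} (hab : IsAdjunctPair a b) :
    orderDim (adjunctLE (α := α) (β := β) a b) =
      orderDim ((· ≤ ·) : α → α → Prop) := by
  classical
  obtain ⟨hablt, K, M, hK, hM, hdisj, hunion, _, _, haK, hbK, _, hKM⟩ := hab
  obtain ⟨m₀, hm₀⟩ := hM
  have hmem : ∀ x : α, x ∈ K ∨ x ∈ M := fun x => by
    have hx : x ∈ K ∪ M := by rw [hunion]; exact Set.mem_univ x
    exact hx
  have hKnM : ∀ x ∈ K, x ∉ M := fun x hx h => Set.disjoint_left.mp hdisj hx h
  have hMnK : ∀ x ∈ M, x ∉ K := fun x hx h => Set.disjoint_left.mp hdisj h hx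
  have hnba : ¬ b ≤ a := not_le_of_gt hablt
  have hMa : ∀ x ∈ M, ¬ x ≤ a := fun x hx h => hnba ((hKM a haK x hx).2.mp h)
  have hMb : ∀ x ∈ M, ¬ b ≤ x := fun x hx h => hnba ((hKM b hbK x hx).1.mp h)
  have ham₀ : a ≤ m₀ := (hKM a haK m₀ hm₀).1.mpr le_rfl
  have hm₀b : m₀ ≤ b := (hKM b hbK m₀ hm₀).2.mpr le_rfl
  -- the adjunct relation is a partial order
  have hadjpo : IsPartialOrder (α ⊕ β) (adjunctLE (α := α) (β := β) a b) := by
    refine { refl := ?_, trans := ?_, antisymm := ?_ }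
    · rintro (x | c)
      · exact le_refl x
      · exact le_refl c
    · rintro (x | c) (y | d) (z | e) h1 h2
      · exact le_trans h1 h2
      · exact le_trans h1 h2
      · exact le_trans h1 (le_trans hablt.le h2)
      · exact h1
      · exact le_trans h1 h2
      · exact absurd (le_trans h1 h2) hnba
      · exact h2
      · exact le_trans h1 h2
    · rintro (x | c) (y | d) h1 h2
      · exact congrArg Sum.inl (le_antisymm h1 h2)
      · exact absurd (le_trans h2 h1) hnba
      · exact absurd (le_trans h1 h2) hnba
      · exact congrArg Sum.inr (le_antisymm h1 h2)
  set d := orderDim ((· ≤ ·) : α → α → Prop) with hd_def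
  have hBne : Set.Nonempty
      {t | 0 < t ∧ ∃ R : Fin t → α → α → Prop, IsRealizer ((· ≤ ·) : α → α → Prop) R} := by
    obtain ⟨t, ht, R, hRR⟩ := exists_realizer_s10 (γ := α) (le := ((· ≤ ·) : α → α → Prop))
      { refl := le_refl, trans := fun _ _ _ => le_trans, antisymm := fun _ _ => le_antisymm }
    exact ⟨t, ht, R, hRR⟩
  have hdmem : d ∈
      {t | 0 < t ∧ ∃ R : Fin t → α → α → Prop, IsRealizer ((· ≤ ·) : α → α → Prop) R} := by
    rw [hd_def]; exact Nat.sInf_mem hBne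
  obtain ⟨hdpos, R, hR⟩ := hdmem
  have hRrefl : ∀ (i : Fin d) (x : α), R i x x := fun i x => (hR.1 i).refl x
  have hRtrans : ∀ (i : Fin d) (x y z : α), R i x y → R i y z → R i x z :=
    fun i => (hR.1 i).trans
  have hRanti : ∀ (i : Fin d) (x y : α), R i x y → R i y x → x = y :=
    fun i => (hR.1 i).antisymm
  have hRtot : ∀ (i : Fin d) (x y : α), R i x y ∨ R i y x := fun i => (hR.1 i).total
  have hRle : ∀ (i : Fin d) (x y : α), x ≤ y → R i x y := fun i x y h => (hR.2 x y).mp h i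
  have hRiff : ∀ x y : α, x ≤ y ↔ ∀ i, R i x y := hR.2
  have hd2 : 2 ≤ d := by
    by_contra hcon
    push_neg at hcon
    have hd1 : d = 1 := by omega
    apply hnc
    intro x y
    have hi : ∀ i : Fin d, i = ⟨0, hdpos⟩ := fun i => Fin.ext (by have := i.2; omega)
    rcases hRtot ⟨0, hdpos⟩ x y with h | h
    · left; exact (hRiff x y).mpr (fun i => by rw [hi i]; exact h)
    · right; exact (hRiff y x).mpr (fun i => by rw [hi i]; exact h)
  set i0 : Fin d := ⟨0, hdpos⟩ with hi0_def
  set i1 : Fin d := ⟨1, hd2⟩ with hi1_def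
  have hi10 : i1 ≠ i0 := by
    intro hcon
    have := congrArg Fin.val hcon
    simp [hi0_def, hi1_def] at this
  set π : α → α := fun x => if x ∈ M then m₀ else x with hπ
  have hπK : ∀ x, x ∉ M → π x = x := fun x hx => by rw [hπ]; exact if_neg hx
  have hπM : ∀ x ∈ M, π x = m₀ := fun x hx => by rw [hπ]; exact if_pos hx
  set S : Fin d → α → α → Prop :=
    fun i x y => R i (π x) (π y) ∧ (π x = π y → R i x y) with hSdef
  set P : Fin d → α → Prop := fun i x => R i (π x) m₀ ∧ (i = i0 → x ∉ M) with hPdef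
  have hSrefl : ∀ i x, S i x x := fun i x => ⟨hRrefl i _, fun _ => hRrefl i x⟩
  have hStrans : ∀ i x y z, S i x y → S i y z → S i x z := by
    rintro i x y z ⟨h1, h1'⟩ ⟨h2, h2'⟩
    refine ⟨hRtrans i _ _ _ h1 h2, fun hxz => ?_⟩
    have h2'' : R i (π y) (π x) := by rw [hxz]; exact h2
    have hxy : π x = π y := hRanti i _ _ h1 h2''
    have hyz : π y = π z := by rw [← hxy, hxz]
    exact hRtrans i x y z (h1' hxy) (h2' hyz)
  have hSanti : ∀ i x y, S i x y → S i y x → x = y := by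
    rintro i x y ⟨h1, h1'⟩ ⟨h2, h2'⟩
    have hxy : π x = π y := hRanti i _ _ h1 h2
    exact hRanti i x y (h1' hxy) (h2' hxy.symm)
  have hStot : ∀ i x y, S i x y ∨ S i y x := by
    intro i x y
    by_cases hxy : π x = π y
    · rcases hRtot i x y with h | h
      · left; exact ⟨by rw [hxy]; exact hRrefl i (π y), fun _ => h⟩
      · right; exact ⟨by rw [hxy]; exact hRrefl i (π y), fun _ => h⟩
    · rcases hRtot i (π x) (π y) with h | h
      · left; exact ⟨h, fun h' => absurd h' hxy⟩
      · right; exact ⟨h, fun h' => absurd h'.symm hxy⟩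
  have hPdown : ∀ i x y, S i x y → P i y → P i x := by
    rintro i x y ⟨h1, -⟩ ⟨h2, h2'⟩
    refine ⟨hRtrans i _ _ _ h1 h2, fun hii hxM => ?_⟩
    have hyM : y ∉ M := h2' hii
    have hπx : π x = m₀ := hπM x hxM
    have hπy : π y = y := hπK y hyM
    rw [hπx, hπy] at h1
    rw [hπy] at h2
    have hy : y = m₀ := hRanti i y m₀ h2 h1
    rw [hy] at hyM
    exact hyM hm₀
  set Q : Fin d → (α ⊕ β) → (α ⊕ β) → Prop := fun i => adjRel (S i) (P i) with hQdef
  have hQlin : ∀ i, IsLinearOrder (α ⊕ β) (Q i) := by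
    intro i
    refine isLinearOrder_mk ?_ ?_ ?_ ?_
    · rintro (x | c)
      · exact hSrefl i x
      · exact le_refl c
    · rintro (x | c) (y | dd) (z | e) h1 h2
      · exact hStrans i x y z h1 h2
      · exact hPdown i x y h1 h2
      · rcases hStot i x z with h | h
        · exact h
        · exact absurd (hPdown i z x h h1) h2
      · exact h1
      · exact fun h => h1 (hPdown i y z h2 h)
      · exact absurd h2 h1
      · exact h2
      · exact le_trans h1 h2
    · rintro (x | c) (y | dd) h1 h2
      · exact congrArg Sum.inl (hSanti i x y h1 h2)
      · exact absurd h1 h2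
      · exact absurd h2 h1
      · exact congrArg Sum.inr (le_antisymm h1 h2)
    · rintro (x | c) (y | dd)
      · exact hStot i x y
      · exact em (P i x)
      · exact (em (P i y)).symm
      · exact le_total c dd
  have hQreal : IsRealizer (adjunctLE (α := α) (β := β) a b) Q := by
    refine ⟨hQlin, ?_⟩
    rintro (x | c) (y | e)
    · show x ≤ y ↔ ∀ i, S i x y
      rcases hmem x with hx | hx <;> rcases hmem y with hy | hy
      · have hpx := hπK x (hKnM x hx); have hpy := hπK y (hKnM y hy)
        constructor
        · intro h i
          exact ⟨by rw [hpx, hpy]; exact hRle i x y h, fun _ => hRle i x y h⟩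
        · intro h
          refine (hRiff x y).mpr (fun i => ?_)
          have h1 := (h i).1
          rwa [hpx, hpy] at h1
      · have hpx := hπK x (hKnM x hx); have hpy := hπM y hy
        have hxm : x ≠ m₀ := fun h => hMnK m₀ hm₀ (h ▸ hx)
        have hSiff : ∀ i, S i x y ↔ R i x m₀ := by
          intro i
          constructor
          · rintro ⟨h1, -⟩; rwa [hpx, hpy] at h1
          · intro h
            refine ⟨by rw [hpx, hpy]; exact h, fun h' => ?_⟩
            rw [hpx, hpy] at h'
            exact absurd h' hxm
        calc x ≤ y ↔ x ≤ a := (hKM x hx y hy).1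
          _ ↔ x ≤ m₀ := ((hKM x hx m₀ hm₀).1).symm
          _ ↔ ∀ i, R i x m₀ := hRiff x m₀
          _ ↔ ∀ i, S i x y := forall_congr' (fun i => (hSiff i).symm)
      · have hpx := hπM x hx; have hpy := hπK y (hKnM y hy)
        have hym : m₀ ≠ y := fun h => hMnK m₀ hm₀ (by rw [h]; exact hy)
        have hSiff : ∀ i, S i x y ↔ R i m₀ y := by
          intro i
          constructor
          · rintro ⟨h1, -⟩; rwa [hpx, hpy] at h1
          · intro h
            refine ⟨by rw [hpx, hpy]; exact h, fun h' => ?_⟩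
            rw [hpx, hpy] at h'
            exact absurd h' hym
        calc x ≤ y ↔ b ≤ y := (hKM y hy x hx).2
          _ ↔ m₀ ≤ y := ((hKM y hy m₀ hm₀).2).symm
          _ ↔ ∀ i, R i m₀ y := hRiff m₀ y
          _ ↔ ∀ i, S i x y := forall_congr' (fun i => (hSiff i).symm)
      · have hpx := hπM x hx; have hpy := hπM y hy
        have hSiff : ∀ i, S i x y ↔ R i x y := by
          intro i
          constructor
          · rintro ⟨-, h2⟩; exact h2 (by rw [hpx, hpy])
          · intro h
            exact ⟨by rw [hpx, hpy]; exact hRrefl i m₀, fun _ => h⟩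
        calc x ≤ y ↔ ∀ i, R i x y := hRiff x y
          _ ↔ ∀ i, S i x y := forall_congr' (fun i => (hSiff i).symm)
    · show x ≤ a ↔ ∀ i, P i x
      constructor
      · intro h i
        have hxM : x ∉ M := fun hxm => hMa x hxm h
        refine ⟨?_, fun _ => hxM⟩
        rw [hπK x hxM]
        exact hRle i x m₀ (le_trans h ham₀)
      · intro h
        have hxM : x ∉ M := (h i0).2 rfl
        have hxK : x ∈ K := (hmem x).resolve_right hxM
        refine (hKM x hxK m₀ hm₀).1.mp ?_
        refine (hRiff x m₀).mpr (fun i => ?_)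
        have h1 := (h i).1
        rwa [hπK x hxM] at h1
    · show b ≤ y ↔ ∀ i, ¬ P i y
      constructor
      · intro h i
        have hyM : y ∉ M := fun hm => hMb y hm h
        have hyK : y ∈ K := (hmem y).resolve_right hyM
        have hmy : m₀ ≤ y := (hKM y hyK m₀ hm₀).2.mpr h
        rintro ⟨h1, -⟩
        rw [hπK y hyM] at h1
        have hy : y = m₀ := hRanti i y m₀ h1 (hRle i m₀ y hmy)
        rw [hy] at hyM
        exact hyM hm₀
      · intro h
        have hyM : y ∉ M := by
          intro hyM
          refine h i1 ⟨?_, fun hcon => absurd hcon hi10⟩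
          rw [hπM y hyM]
          exact hRrefl i1 m₀
        have hyK : y ∈ K := (hmem y).resolve_right hyM
        refine (hKM y hyK m₀ hm₀).2.mp ?_
        refine (hRiff m₀ y).mpr (fun i => ?_)
        rcases hRtot i y m₀ with hc | hc
        · exfalso
          refine h i ⟨?_, fun _ => hyM⟩
          rwa [hπK y hyM]
        · exact hc
    · show c ≤ e ↔ ∀ _ : Fin d, c ≤ e
      exact ⟨fun h _ => h, fun h => h i0⟩
  apply le_antisymm
  · exact Nat.sInf_le ⟨hdpos, Q, hQreal⟩
  · have hAne : Set.Nonempty {t | 0 < t ∧ ∃ T : Fin t → (α ⊕ β) → (α ⊕ β) → Prop,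
        IsRealizer (adjunctLE (α := α) (β := β) a b) T} := by
      obtain ⟨t, ht, T, hT⟩ := exists_realizer_s10 hadjpo
      exact ⟨t, ht, T, hT⟩
    have hDmem := Nat.sInf_mem hAne
    obtain ⟨hDpos, T, hT⟩ := hDmem
    refine Nat.sInf_le ⟨hDpos, fun i x y => T i (Sum.inl x) (Sum.inl y), ?_, ?_⟩
    · intro i
      refine isLinearOrder_mk ?_ ?_ ?_ ?_
      · exact fun x => (hT.1 i).refl (Sum.inl x)
      · exact fun x y z h1 h2 => (hT.1 i).trans _ _ _ h1 h2
      · exact fun x y h1 h2 => Sum.inl.inj ((hT.1 i).antisymm _ _ h1 h2)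
      · exact fun x y => (hT.1 i).total (Sum.inl x) (Sum.inl y)
    · intro x y
      exact hT.2 (Sum.inl x) (Sum.inl y)
end
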